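/- Let n ≥ 2, m_* < m < 1, let a ∈ ℝⁿ be nonzero, let φ(y) := A·(|a|·|y| + a·y)^{−1/(1−m)} on ℝⁿ \ {−τ a/|a| : τ ≥ 0}, and let 0 < γ < 1. Then φ⁺ := (1+γ)·φ satisfies Δ((φ⁺)ᵐ)(y) + a·∇φ⁺(y) = ((1+γ)ᵐ − (1+γ))·Δ(φᵐ)(y) ≤ 0 at every point y of this set; that is, φ⁺ is a (stationary) supersolution of ∂ₜv = Δ(vᵐ) + a·∇v. -/

import Mathlib

open scoped RealInnerProductSpace
open Set

/-- The Laplacian of `f : ℝⁿ → ℝ`: the sum of the second derivatives along the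
standard orthonormal coordinate directions. -/
noncomputable def lap {n : ℕ} (f : EuclideanSpace ℝ (Fin n) → ℝ)
    (x : EuclideanSpace ℝ (Fin n)) : ℝ :=
  ∑ i : Fin n, iteratedFDeriv ℝ 2 f x ![EuclideanSpace.single i 1, EuclideanSpace.single i 1]

/-- `m_* = 0` if `n = 2` and `(n-3)/(n-1)` if `n ≥ 3`. -/
noncomputable def mstar (n : ℕ) : ℝ := if n = 2 then 0 else ((n : ℝ) - 3) / ((n : ℝ) - 1)

section gen
variable {F : Type*} [NormedAddCommGroup F] [InnerProductSpace ℝ F]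

theorem hasFDerivAt_norm' {x : F} (hx : x ≠ 0) :
    HasFDerivAt (fun z : F => ‖z‖) (‖x‖⁻¹ • innerSL ℝ x) x := by
  have h1 : HasFDerivAt (fun z : F => ‖z‖ ^ 2) (2 • innerSL ℝ x) x :=
    (hasStrictFDerivAt_norm_sq x).hasFDerivAt
  have h2 : HasDerivAt Real.sqrt (1 / (2 * Real.sqrt (‖x‖ ^ 2))) (‖x‖ ^ 2) :=
    Real.hasDerivAt_sqrt (by have : ‖x‖ ≠ 0 := norm_ne_zero_iff.mpr hx; positivity)
  have h3 := h2.comp_hasFDerivAt x h1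
  have hxe : Real.sqrt (‖x‖ ^ 2) = ‖x‖ := Real.sqrt_sq (norm_nonneg x)
  rw [show Real.sqrt ∘ (fun z : F => ‖z‖ ^ 2) = fun z : F => ‖z‖ from
    funext fun z => Real.sqrt_sq (norm_nonneg z)] at h3
  convert h3 using 1
  · rfl
  · rfl
  rw [hxe]
  ext v
  simp [two_smul]
  have : ‖x‖ ≠ 0 := norm_ne_zero_iff.mpr hx
  field_simp
  ring

theorem hasFDerivAt_u (a : F) {x : F} (hx : x ≠ 0) :
    HasFDerivAt (fun z : F => ‖a‖ * ‖z‖ + ⟪a, z⟫)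
      ((‖a‖ * ‖x‖⁻¹) • innerSL ℝ x + innerSL ℝ a) x := by
  have h1 : HasFDerivAt (fun z : F => ‖a‖ * ‖z‖ + ⟪a, z⟫)
      (‖a‖ • ‖x‖⁻¹ • innerSL ℝ x + innerSL ℝ a) x :=
    ((hasFDerivAt_norm' hx).const_mul ‖a‖).add ((innerSL ℝ a).hasFDerivAt (x := x))
  exact h1.congr_fderiv (by rw [smul_smul])

theorem hasFDerivAt_Cus (a : F) (C s : ℝ) {x : F} (hx : x ≠ 0)
    (hu : 0 < ‖a‖ * ‖x‖ + ⟪a, x⟫) :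
    HasFDerivAt (fun z : F => C * (‖a‖ * ‖z‖ + ⟪a, z⟫) ^ s)
      ((C * s * (‖a‖ * ‖x‖ + ⟪a, x⟫) ^ (s - 1) * (‖a‖ * ‖x‖⁻¹)) • innerSL ℝ x
        + (C * s * (‖a‖ * ‖x‖ + ⟪a, x⟫) ^ (s - 1)) • innerSL ℝ a) x := by
  have h1 : HasFDerivAt (fun z : F => C * (‖a‖ * ‖z‖ + ⟪a, z⟫) ^ s)
      (C • (s * (‖a‖ * ‖x‖ + ⟪a, x⟫) ^ (s - 1)) •
        ((‖a‖ * ‖x‖⁻¹) • innerSL ℝ x + innerSL ℝ a)) x :=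
    ((hasFDerivAt_u a hx).rpow_const (p := s) (Or.inl hu.ne')).const_mul C
  refine h1.congr_fderiv ?_
  ext v
  simp
  ring

end gen

section euc
variable {n : ℕ}
local notation "E" => EuclideanSpace ℝ (Fin n)

theorem sum_inner_single (w z : E) :
    ∑ i : Fin n, ⟪w, EuclideanSpace.single i 1⟫ * ⟪z, EuclideanSpace.single i 1⟫ = ⟪w, z⟫ := by
  simp [EuclideanSpace.inner_single_right, PiLp.inner_apply, RCLike.inner_apply]
  exact Finset.sum_congr rfl fun i _ => mul_comm _ _

theorem sum_inner_single_self :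
    ∑ i : Fin n, ⟪(EuclideanSpace.single i 1 : E), EuclideanSpace.single i 1⟫ = (n : ℝ) := by
  simp [EuclideanSpace.inner_single_right]

theorem lap_master (a : E) (C s : ℝ) (x : E) (hu : 0 < ‖a‖ * ‖x‖ + ⟪a, x⟫) :
    lap (fun z => C * (‖a‖ * ‖z‖ + ⟪a, z⟫) ^ s) x
      = C * s * ‖a‖ * ‖x‖⁻¹ * (‖a‖ * ‖x‖ + ⟪a, x⟫) ^ (s - 1) * (2 * s + (n : ℝ) - 3) := by
  have hx : x ≠ 0 := by
    rintro rfl; simp at hu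
  have hxn : ‖x‖ ≠ 0 := norm_ne_zero_iff.mpr hx
  set f : E → ℝ := fun z => C * (‖a‖ * ‖z‖ + ⟪a, z⟫) ^ s with hf
  -- the open set where u > 0
  have hUopen : IsOpen {z : E | 0 < ‖a‖ * ‖z‖ + ⟪a, z⟫} := by
    apply isOpen_lt continuous_const
    exact (continuous_const.mul continuous_norm).add (innerSL ℝ a).continuous
  have hfd : fderiv ℝ f =ᶠ[nhds x] fun y : E =>
      (C * s * (‖a‖ * ‖y‖ + ⟪a, y⟫) ^ (s - 1) * (‖a‖ * ‖y‖⁻¹)) • innerSL ℝ y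
        + (C * s * (‖a‖ * ‖y‖ + ⟪a, y⟫) ^ (s - 1)) • innerSL ℝ a := by
    filter_upwards [hUopen.mem_nhds hu] with z hz
    have hz0 : z ≠ 0 := by rintro rfl; simp at hz
    exact (hasFDerivAt_Cus a C s hz0 hz).fderiv
  -- derivatives of the coefficient functions
  have hh : HasFDerivAt (fun y : E => C * s * (‖a‖ * ‖y‖ + ⟪a, y⟫) ^ (s - 1))
      ((C * s * (s - 1) * (‖a‖ * ‖x‖ + ⟪a, x⟫) ^ (s - 1 - 1) * (‖a‖ * ‖x‖⁻¹)) • innerSL ℝ x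
        + (C * s * (s - 1) * (‖a‖ * ‖x‖ + ⟪a, x⟫) ^ (s - 1 - 1)) • innerSL ℝ a) x := by
    exact hasFDerivAt_Cus a (C * s) (s - 1) hx hu
  have hk : HasFDerivAt (fun y : E => ‖a‖ * ‖y‖⁻¹)
      (‖a‖ • ((-(‖x‖ ^ 2)⁻¹) • (‖x‖⁻¹ • innerSL ℝ x))) x := by
    have hk0 := (hasDerivAt_inv hxn).comp_hasFDerivAt x (hasFDerivAt_norm' hx)
    exact hk0.const_mul ‖a‖
  have hg := hh.mul hk
  have hι : HasFDerivAt (fun y : E => innerSL ℝ y)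
      (innerSL ℝ : EuclideanSpace ℝ (Fin n) →L[ℝ] _) x :=
    (innerSL ℝ : EuclideanSpace ℝ (Fin n) →L[ℝ] _).hasFDerivAt
  have hD := (hg.smul hι).add (hh.smul (hasFDerivAt_const (innerSL ℝ a) x))
  have key := hfd.fderiv_eq.trans hD.fderiv
  have hDvv : ∀ v : E, fderiv ℝ (fderiv ℝ f) x v v =
      (C * s * (‖a‖ * ‖x‖ + ⟪a, x⟫) ^ (s - 1) * (‖a‖ * ‖x‖⁻¹)) * ⟪v, v⟫
      + (C * s * (‖a‖ * ‖x‖ + ⟪a, x⟫) ^ (s - 1) * (‖a‖ * (-(‖x‖ ^ 2)⁻¹) * ‖x‖⁻¹)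
          + (‖a‖ * ‖x‖⁻¹) * (C * s * (s - 1) * (‖a‖ * ‖x‖ + ⟪a, x⟫) ^ (s - 1 - 1) * (‖a‖ * ‖x‖⁻¹)))
          * (⟪x, v⟫ * ⟪x, v⟫)
      + ((‖a‖ * ‖x‖⁻¹) * (C * s * (s - 1) * (‖a‖ * ‖x‖ + ⟪a, x⟫) ^ (s - 1 - 1))
          + (C * s * (s - 1) * (‖a‖ * ‖x‖ + ⟪a, x⟫) ^ (s - 1 - 1) * (‖a‖ * ‖x‖⁻¹)))
          * (⟪a, v⟫ * ⟪x, v⟫)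
      + (C * s * (s - 1) * (‖a‖ * ‖x‖ + ⟪a, x⟫) ^ (s - 1 - 1)) * (⟪a, v⟫ * ⟪a, v⟫) := by
    intro v
    rw [key]
    simp [ContinuousLinearMap.smulRight_apply, innerSL_apply_apply]
    have hvv : ((innerSL ℝ) v) v = ‖v‖ ^ 2 := real_inner_self_eq_norm_sq v
    linear_combination (C * s * ‖a‖ * (‖a‖ * ‖x‖ + ⟪a, x⟫) ^ (s - 1) * ‖x‖⁻¹) * hvv
  have hlap : lap f x = ∑ i : Fin n,
      fderiv ℝ (fderiv ℝ f) x (EuclideanSpace.single i 1) (EuclideanSpace.single i 1) := by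
    unfold lap
    refine Finset.sum_congr rfl fun i _ => ?_
    rw [iteratedFDeriv_two_apply]
    simp
  rw [hlap]
  have := fun i : Fin n => hDvv (EuclideanSpace.single i 1)
  rw [Finset.sum_congr rfl fun i _ => this i]
  rw [Finset.sum_add_distrib, Finset.sum_add_distrib, Finset.sum_add_distrib,
    ← Finset.mul_sum, ← Finset.mul_sum, ← Finset.mul_sum, ← Finset.mul_sum,
    sum_inner_single_self, sum_inner_single, sum_inner_single, sum_inner_single]
  rw [real_inner_self_eq_norm_sq, real_inner_self_eq_norm_sq]
  have hw : (‖a‖ * ‖x‖ + ⟪a, x⟫) ^ (s - 1) =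
      (‖a‖ * ‖x‖ + ⟪a, x⟫) ^ (s - 1 - 1) * (‖a‖ * ‖x‖ + ⟪a, x⟫) := by
    have h := Real.rpow_add hu (s - 1 - 1) 1
    rw [Real.rpow_one] at h
    rw [show s - 1 - 1 + 1 = s - 1 by ring] at h
    exact h
  rw [hw]
  field_simp
  ring
theorem inner_grad (a : E) (C s : ℝ) {x : E} (hx : x ≠ 0)
    (hu : 0 < ‖a‖ * ‖x‖ + ⟪a, x⟫) :
    ⟪a, gradient (fun z : E => C * (‖a‖ * ‖z‖ + ⟪a, z⟫) ^ s) x⟫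
      = C * s * ‖a‖ * ‖x‖⁻¹ * (‖a‖ * ‖x‖ + ⟪a, x⟫) ^ s := by
  have hxn : ‖x‖ ≠ 0 := norm_ne_zero_iff.mpr hx
  have hL := hasFDerivAt_Cus a C s hx hu
  have h1 : ⟪a, gradient (fun z : E => C * (‖a‖ * ‖z‖ + ⟪a, z⟫) ^ s) x⟫
      = fderiv ℝ (fun z : E => C * (‖a‖ * ‖z‖ + ⟪a, z⟫) ^ s) x a := by
    rw [real_inner_comm]
    unfold gradient
    exact InnerProductSpace.toDual_symm_apply
  rw [h1, hL.fderiv]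
  have hw : (‖a‖ * ‖x‖ + ⟪a, x⟫) ^ s =
      (‖a‖ * ‖x‖ + ⟪a, x⟫) ^ (s - 1) * (‖a‖ * ‖x‖ + ⟪a, x⟫) := by
    have h := Real.rpow_add hu (s - 1) 1
    rw [Real.rpow_one] at h
    rw [show s - 1 + 1 = s by ring] at h
    exact h
  simp only [ContinuousLinearMap.add_apply, ContinuousLinearMap.smul_apply, innerSL_apply_apply,
    smul_eq_mul]
  rw [hw, real_inner_comm x a, real_inner_self_eq_norm_sq]
  field_simp
  ring

theorem lap_congr {f g : E → ℝ} {x : E} (h : f =ᶠ[nhds x] g) : lap f x = lap g x := by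
  have h2 : iteratedFDeriv ℝ 2 f x = iteratedFDeriv ℝ 2 g x := by
    rw [← iteratedFDerivWithin_univ, ← iteratedFDerivWithin_univ]
    exact (h.filter_mono nhdsWithin_le_nhds).iteratedFDerivWithin_eq h.eq_of_nhds 2
  unfold lap
  rw [h2]

end euc

theorem stmt_4 (n : ℕ) (hn : 2 ≤ n) (m : ℝ) (hm : mstar n < m) (hm1 : m < 1)
    (a : EuclideanSpace ℝ (Fin n)) (ha : a ≠ 0)
    (A : ℝ)
    (hA : A = (((n : ℝ) - 1) * m / (1 - m) * (m - ((n : ℝ) - 3) / ((n : ℝ) - 1)))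
        ^ ((1 : ℝ) / (1 - m)))
    (φ : EuclideanSpace ℝ (Fin n) → ℝ)
    (hφ : ∀ y, φ y = A * (‖a‖ * ‖y‖ + ⟪a, y⟫) ^ (-(1 / (1 - m))))
    (S : Set (EuclideanSpace ℝ (Fin n)))
    (hS : S = {y | ¬ ∃ τ : ℝ, 0 ≤ τ ∧ y = -(τ • (‖a‖⁻¹ • a))})
    (γ : ℝ) (hγ0 : 0 < γ) (hγ1 : γ < 1)
    (ψ : EuclideanSpace ℝ (Fin n) → ℝ)
    (hψ : ∀ y, ψ y = (1 + γ) * φ y) :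
    ∀ y ∈ S,
      lap (fun z => ψ z ^ m) y + ⟪a, gradient ψ y⟫
        = ((1 + γ) ^ m - (1 + γ)) * lap (fun z => φ z ^ m) y ∧
      lap (fun z => ψ z ^ m) y + ⟪a, gradient ψ y⟫ ≤ 0 := by
  intro y hy
  have han : ‖a‖ ≠ 0 := norm_ne_zero_iff.mpr ha
  -- basic facts about m, n
  have hm1' : (0 : ℝ) < 1 - m := by linarith
  have hm0 : 0 < m := by
    rcases eq_or_lt_of_le hn with h2 | h3
    · have : mstar n = 0 := by rw [mstar, if_pos h2.symm]
      linarith [hm, this]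
    · have hn3 : (3 : ℝ) ≤ (n : ℝ) := by exact_mod_cast h3
      have : mstar n = ((n : ℝ) - 3) / ((n : ℝ) - 1) := by
        rw [mstar, if_neg (by omega)]
      have h0 : (0 : ℝ) ≤ ((n : ℝ) - 3) / ((n : ℝ) - 1) :=
        div_nonneg (by linarith) (by linarith)
      linarith [hm, this ▸ hm]
  have hn1 : (0 : ℝ) < (n : ℝ) - 1 := by
    have : (2 : ℝ) ≤ (n : ℝ) := by exact_mod_cast hn
    linarith
  have hKey : ((n : ℝ) - 3) < ((n : ℝ) - 1) * m := by
    rcases eq_or_lt_of_le hn with h2 | h3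
    · have hn2 : (n : ℝ) = 2 := by exact_mod_cast h2.symm
      rw [hn2]; nlinarith
    · have : mstar n = ((n : ℝ) - 3) / ((n : ℝ) - 1) := by
        rw [mstar, if_neg (by omega)]
      have := this ▸ hm
      calc ((n : ℝ) - 3) = (((n : ℝ) - 3) / ((n : ℝ) - 1)) * ((n : ℝ) - 1) := by
            field_simp
        _ < m * ((n : ℝ) - 1) := by
            apply mul_lt_mul_of_pos_right this hn1
        _ = ((n : ℝ) - 1) * m := by ring
  have hBpos : 0 < ((n : ℝ) - 1) * m / (1 - m) * (m - ((n : ℝ) - 3) / ((n : ℝ) - 1)) := by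
    have he : ((n : ℝ) - 1) * m / (1 - m) * (m - ((n : ℝ) - 3) / ((n : ℝ) - 1))
        = m * (((n : ℝ) - 1) * m - ((n : ℝ) - 3)) / (1 - m) := by
      field_simp
    rw [he]
    apply div_pos _ hm1'
    apply mul_pos hm0
    linarith
  have hApos : 0 < A := by rw [hA]; exact Real.rpow_pos_of_pos hBpos _
  set P : ℝ := -(1 / (1 - m)) with hP
  -- positivity of u at y
  have hu : 0 < ‖a‖ * ‖y‖ + ⟪a, y⟫ := by
    have habs := abs_le.mp (abs_real_inner_le_norm a y)
    have hge : 0 ≤ ‖a‖ * ‖y‖ + ⟪a, y⟫ := by linarith [habs.1]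
    rcases hge.lt_or_eq with h | h
    · exact h
    · exfalso
      rw [hS] at hy
      apply hy
      refine ⟨‖y‖, norm_nonneg y, ?_⟩
      have h1 : ⟪a, -y⟫ = ‖a‖ * ‖(-y)‖ := by
        rw [inner_neg_right, norm_neg]; linarith
      have h2 := inner_eq_norm_mul_iff_real.mp h1
      rw [norm_neg] at h2
      -- h2 : ‖y‖ • a = ‖a‖ • -y
      rw [smul_comm, h2, smul_smul, inv_mul_cancel₀ han, one_smul, neg_neg]
  have hy0 : y ≠ 0 := by rintro rfl; simp at hu
  have hyn : ‖y‖ ≠ 0 := norm_ne_zero_iff.mpr hy0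
  -- open set where u > 0
  have hUopen : IsOpen {z : EuclideanSpace ℝ (Fin n) | 0 < ‖a‖ * ‖z‖ + ⟪a, z⟫} := by
    apply isOpen_lt continuous_const
    exact (continuous_const.mul continuous_norm).add (innerSL ℝ a).continuous
  have hC1pos : (0 : ℝ) < (1 + γ) * A := by positivity
  -- ψ as a closed form
  have hψfun : ψ = fun z => ((1 + γ) * A) * (‖a‖ * ‖z‖ + ⟪a, z⟫) ^ P := by
    funext z; rw [hψ, hφ]; ring
  -- eventual equality for ψ^m
  have hEψ : (fun z => ψ z ^ m) =ᶠ[nhds y]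
      (fun z => (((1 + γ) * A) ^ m) * (‖a‖ * ‖z‖ + ⟪a, z⟫) ^ (P * m)) := by
    filter_upwards [hUopen.mem_nhds hu] with z hz
    rw [hψfun]
    simp only
    rw [Real.mul_rpow hC1pos.le (Real.rpow_nonneg (le_of_lt hz) P),
      ← Real.rpow_mul (le_of_lt hz)]
  have hEφ : (fun z => φ z ^ m) =ᶠ[nhds y]
      (fun z => (A ^ m) * (‖a‖ * ‖z‖ + ⟪a, z⟫) ^ (P * m)) := by
    filter_upwards [hUopen.mem_nhds hu] with z hz
    rw [hφ]
    rw [Real.mul_rpow hApos.le (Real.rpow_nonneg (le_of_lt hz) P),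
      ← Real.rpow_mul (le_of_lt hz)]
  -- compute the two Laplacians
  have hlapψ : lap (fun z => ψ z ^ m) y
      = (((1 + γ) * A) ^ m) * (P * m) * ‖a‖ * ‖y‖⁻¹
        * (‖a‖ * ‖y‖ + ⟪a, y⟫) ^ (P * m - 1) * (2 * (P * m) + (n : ℝ) - 3) := by
    rw [lap_congr hEψ]
    exact lap_master a _ _ y hu
  have hlapφ : lap (fun z => φ z ^ m) y
      = (A ^ m) * (P * m) * ‖a‖ * ‖y‖⁻¹
        * (‖a‖ * ‖y‖ + ⟪a, y⟫) ^ (P * m - 1) * (2 * (P * m) + (n : ℝ) - 3) := by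
    rw [lap_congr hEφ]
    exact lap_master a _ _ y hu
  -- gradient term
  have hgrad : ⟪a, gradient ψ y⟫
      = ((1 + γ) * A) * P * ‖a‖ * ‖y‖⁻¹ * (‖a‖ * ‖y‖ + ⟪a, y⟫) ^ P := by
    rw [hψfun]
    exact inner_grad a _ _ hy0 hu
  -- exponent identity
  have hexp : P * m - 1 = P := by
    rw [hP]; field_simp; ring
  -- key scalar identity
  have hAB : A ^ (1 - m)
      = ((n : ℝ) - 1) * m / (1 - m) * (m - ((n : ℝ) - 3) / ((n : ℝ) - 1)) := by
    rw [hA, ← Real.rpow_mul hBpos.le,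
      show (1 : ℝ) / (1 - m) * (1 - m) = 1 by field_simp, Real.rpow_one]
  have hA1 : A ^ m * A ^ (1 - m) = A := by
    rw [← Real.rpow_add hApos, show m + (1 - m) = 1 by ring, Real.rpow_one]
  have hfield : (P * m) * (2 * (P * m) + (n : ℝ) - 3)
      = -((((n : ℝ) - 1) * m / (1 - m) * (m - ((n : ℝ) - 3) / ((n : ℝ) - 1))) * P) := by
    rw [hP]
    field_simp
    ring
  have hscal : A ^ m * (P * m) * (2 * (P * m) + (n : ℝ) - 3) = -(A * P) := by
    calc A ^ m * (P * m) * (2 * (P * m) + (n : ℝ) - 3)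
        = A ^ m * ((P * m) * (2 * (P * m) + (n : ℝ) - 3)) := by ring
      _ = A ^ m * (-((((n : ℝ) - 1) * m / (1 - m) * (m - ((n : ℝ) - 3) / ((n : ℝ) - 1))) * P)) := by
          rw [hfield]
      _ = -(A ^ m * A ^ (1 - m) * P) := by rw [hAB]; ring
      _ = -(A * P) := by rw [hA1]
  -- the main equality
  have hC1m : ((1 + γ) * A) ^ m = (1 + γ) ^ m * A ^ m :=
    Real.mul_rpow (by positivity) hApos.le
  have heq : lap (fun z => ψ z ^ m) y + ⟪a, gradient ψ y⟫
      = ((1 + γ) ^ m - (1 + γ)) * lap (fun z => φ z ^ m) y := by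
    rw [hlapψ, hlapφ, hgrad, hC1m, hexp]
    linear_combination ((1 + γ) * ‖a‖ * ‖y‖⁻¹ * (‖a‖ * ‖y‖ + ⟪a, y⟫) ^ P) * hscal
  refine ⟨heq, ?_⟩
  rw [heq, hlapφ]
  -- sign analysis
  have hPneg : P < 0 := by
    have : (0:ℝ) < 1 / (1 - m) := by positivity
    rw [hP]; linarith
  have hPm : P * m < 0 := mul_neg_of_neg_of_pos hPneg hm0
  have h23 : 2 * (P * m) + (n : ℝ) - 3 < 0 := by
    have he : 2 * (P * m) + (n : ℝ) - 3
        = (((n : ℝ) - 3) * (1 - m) - 2 * m) / (1 - m) := by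
      rw [hP]; field_simp; ring
    rw [he]
    apply div_neg_of_neg_of_pos _ hm1'
    nlinarith
  have hsign1 : (1 + γ) ^ m - (1 + γ) ≤ 0 := by
    have h := Real.rpow_le_rpow_of_exponent_le (by linarith : (1 : ℝ) ≤ 1 + γ) hm1.le
    rw [Real.rpow_one] at h
    linarith
  have hAm : (0 : ℝ) < A ^ m := Real.rpow_pos_of_pos hApos m
  have hupos : (0 : ℝ) < (‖a‖ * ‖y‖ + ⟪a, y⟫) ^ (P * m - 1) :=
    Real.rpow_pos_of_pos hu _
  have hlappos : 0 ≤ A ^ m * (P * m) * ‖a‖ * ‖y‖⁻¹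
      * (‖a‖ * ‖y‖ + ⟪a, y⟫) ^ (P * m - 1) * (2 * (P * m) + (n : ℝ) - 3) := by
    have he : A ^ m * (P * m) * ‖a‖ * ‖y‖⁻¹
        * (‖a‖ * ‖y‖ + ⟪a, y⟫) ^ (P * m - 1) * (2 * (P * m) + (n : ℝ) - 3)
      = (A ^ m * ‖a‖ * ‖y‖⁻¹ * (‖a‖ * ‖y‖ + ⟪a, y⟫) ^ (P * m - 1))
        * ((P * m) * (2 * (P * m) + (n : ℝ) - 3)) := by ring
    rw [he]
    have h1 : 0 ≤ A ^ m * ‖a‖ * ‖y‖⁻¹ * (‖a‖ * ‖y‖ + ⟪a, y⟫) ^ (P * m - 1) := by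
      have : 0 < ‖a‖ := lt_of_le_of_ne (norm_nonneg a) (Ne.symm han)
      have : (0:ℝ) < ‖y‖⁻¹ := by
        have : 0 < ‖y‖ := lt_of_le_of_ne (norm_nonneg y) (Ne.symm hyn)
        positivity
      positivity
    exact mul_nonneg h1 (mul_pos_of_neg_of_neg hPm h23).le
  exact mul_nonpos_iff.mpr (Or.inr ⟨hsign1, hlappos⟩)
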